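/- For all n ≥ 1, the number of permutations of [n] avoiding the patterns 123, 132, and 213 equals the Fibonacci number F_{n+1}. -/

import Mathlib

/-- A permutation `π` of `Fin n` avoids the pattern given (in one-line notation) by the
list `s` when there is no increasing choice of positions along which the values of `π`
have the same pairwise comparisons as the entries of `s`. -/
def AvoidsPat {n : ℕ} (π : Equiv.Perm (Fin n)) (s : List ℕ) : Prop :=
  ¬ ∃ f : Fin s.length ↪o Fin n,
      ∀ i j : Fin s.length, s.get i < s.get j ↔ π (f i) < π (f j)

/-- The number of permutations of `Fin n` avoiding every pattern in `R`. -/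
noncomputable def AvoidCount (R : List (List ℕ)) (n : ℕ) : ℕ :=
  Nat.card {π : Equiv.Perm (Fin n) // ∀ s ∈ R, AvoidsPat π s}

/-- The `k`-generalized Fibonacci numbers: `F_{k,n} = 0` for `n ≤ 0`, `F_{k,1} = 1`,
`F_{k,n} = ∑_{i=1}^{k} F_{k,n-i}` for `n ≥ 2` (terms with nonpositive index are `0`). -/
def genFib (k : ℕ) : ℕ → ℕ
  | 0 => 0
  | 1 => 1
  | n + 2 => ∑ i ∈ Finset.range k, genFib k (n + 1 - i)

def Cond {n : ℕ} (π : Equiv.Perm (Fin n)) : Prop :=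
  ∀ i k : Fin n, i.val + 2 ≤ k.val → π k < π i

instance {n : ℕ} : DecidablePred (Cond (n := n)) := fun π => by
  unfold Cond; infer_instance

def emb3 {n : ℕ} (i j k : Fin n) (hij : i < j) (hjk : j < k) : Fin 3 ↪o Fin n :=
  OrderEmbedding.ofStrictMono (![i, j, k]) (by
    intro a b hab
    fin_cases a <;> fin_cases b <;> simp_all <;> omega)

@[simp] lemma emb3_apply {n : ℕ} (i j k : Fin n) (hij : i < j) (hjk : j < k) (a : Fin 3) :
    emb3 i j k hij hjk a = ![i, j, k] a := rfl

theorem cond_iff {n : ℕ} (π : Equiv.Perm (Fin n)) :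
    (∀ s ∈ [[1, 2, 3], [1, 3, 2], [2, 1, 3]], AvoidsPat π s) ↔ Cond π := by
  constructor
  · intro H i k hik
    by_contra hlt
    have hne : π i ≠ π k := fun h => by
      have h2 : i = k := π.injective h
      rw [h2] at hik; omega
    have hik' : π i < π k := lt_of_le_of_ne (not_lt.mp hlt) hne
    have hjn : i.val + 1 < n := by omega
    set j : Fin n := ⟨i.val + 1, by omega⟩ with hj
    have hij : i < j := by simp [Fin.lt_def, hj]
    have hjk : j < k := by simp [Fin.lt_def, hj]; omega
    have hji : j ≠ i := ne_of_gt hij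
    have hkj : k ≠ j := ne_of_gt hjk
    have hne1 : π j ≠ π i := fun h => hji (π.injective h)
    have hne2 : π k ≠ π j := fun h => hkj (π.injective h)
    rcases lt_or_gt_of_ne hne1 with hji' | hji'
    · -- π j < π i : pattern 213
      refine H [2, 1, 3] (by simp) ⟨emb3 i j k hij hjk, ?_⟩
      intro a b
      fin_cases a <;> fin_cases b <;>
        simp_all [List.get] <;> omega
    · rcases lt_or_gt_of_ne hne2 with hjk' | hjk'
      ·
        refine H [1, 3, 2] (by simp) ⟨emb3 i j k hij hjk, ?_⟩
        intro a b
        fin_cases a <;> fin_cases b <;>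
          simp_all [List.get] <;> omega
      · refine H [1, 2, 3] (by simp) ⟨emb3 i j k hij hjk, ?_⟩
        intro a b
        fin_cases a <;> fin_cases b <;>
          simp_all [List.get] <;> omega
  · intro hC s hs
    fin_cases hs <;>
    · rintro ⟨f, hf⟩
      have h01 : f ⟨0, by norm_num⟩ < f ⟨1, by norm_num⟩ := f.strictMono (by norm_num [Fin.lt_def])
      have h12 : f ⟨1, by norm_num⟩ < f ⟨2, by norm_num⟩ := f.strictMono (by norm_num [Fin.lt_def])
      have h02 := (hf ⟨0, by norm_num⟩ ⟨2, by norm_num⟩).mp (by norm_num)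
      have hgap : (f ⟨0, by norm_num⟩).val + 2 ≤ (f ⟨2, by norm_num⟩).val := by
        simp only [Fin.lt_def] at h01 h12; omega
      exact absurd (hC _ _ hgap) (lt_asymm h02)

section Counting

open Equiv Finset

variable {n : ℕ}

lemma val_lt_aux (π : Equiv.Perm (Fin (n+1))) (h : π 0 = Fin.last n) (i : Fin n) :
    ((π i.succ : Fin (n+1)) : ℕ) < n := by
  have hne : π i.succ ≠ Fin.last n := by
    rw [← h]; exact fun he => (Fin.succ_ne_zero i) (π.injective he)
  exact Fin.val_lt_last hne

noncomputable def downPerm1 (π : Equiv.Perm (Fin (n+1))) (h : π 0 = Fin.last n) :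
    Equiv.Perm (Fin n) :=
  Equiv.ofBijective (fun i => ⟨(π i.succ : Fin (n+1)), val_lt_aux π h i⟩)
    (Finite.injective_iff_bijective.mp (by
      intro a b hab
      have : π a.succ = π b.succ := Fin.ext (congrArg Fin.val hab :)
      exact Fin.succ_injective _ (π.injective this)))

@[simp] lemma downPerm1_val (π : Equiv.Perm (Fin (n+1))) (h : π 0 = Fin.last n)
    (i : Fin n) : ((downPerm1 π h i : Fin n) : ℕ) = π i.succ := rfl

noncomputable def upPerm1 (π' : Equiv.Perm (Fin n)) : Equiv.Perm (Fin (n+1)) :=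
  Equiv.ofBijective (fun k => Fin.cases (Fin.last n) (fun i => (π' i).castSucc) k)
    (Finite.injective_iff_bijective.mp (by
      intro a b hab
      cases a using Fin.cases with
      | zero =>
        cases b using Fin.cases with
        | zero => rfl
        | succ j =>
          simp only [Fin.cases_zero, Fin.cases_succ] at hab
          exact absurd hab.symm (Fin.castSucc_lt_last (π' j)).ne
      | succ i =>
        cases b using Fin.cases with
        | zero =>
          simp only [Fin.cases_zero, Fin.cases_succ] at hab
          exact absurd hab (Fin.castSucc_lt_last (π' i)).ne
        | succ j =>
          simp only [Fin.cases_succ] at hab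
          exact congrArg Fin.succ (π'.injective (Fin.castSucc_injective _ hab))))

@[simp] lemma upPerm1_zero (π' : Equiv.Perm (Fin n)) :
    upPerm1 π' 0 = Fin.last n := rfl

@[simp] lemma upPerm1_succ (π' : Equiv.Perm (Fin n)) (i : Fin n) :
    upPerm1 π' i.succ = (π' i).castSucc := rfl

lemma lemB (π : Equiv.Perm (Fin (n+2))) (hC : Cond π) (h : π 0 ≠ Fin.last (n+1)) :
    ((π 0 : Fin (n+2)) : ℕ) = n ∧ π 1 = Fin.last (n+1) := by
  have hlt : ∀ m : Fin n, π ⟨m.val + 2, by omega⟩ < π 0 :=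
    fun m => hC 0 ⟨m.val + 2, by omega⟩ (by simp)
  have hinj : Function.Injective
      (fun m : Fin n => (⟨(π ⟨m.val + 2, by omega⟩ : Fin (n+2)), hlt m⟩ : Fin (π 0 : Fin (n+2)).val)) := by
    intro a b hab
    have h1 : π ⟨a.val + 2, by omega⟩ = π ⟨b.val + 2, by omega⟩ :=
      Fin.ext (congrArg Fin.val hab :)
    have h2 := π.injective h1
    have := congrArg Fin.val h2
    simp only at this
    exact Fin.ext (by omega)
  have hge : n ≤ ((π 0 : Fin (n+2)) : ℕ) := by
    simpa using Fintype.card_le_of_injective _ hinj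
  have hlt' : ((π 0 : Fin (n+2)) : ℕ) < n + 1 := Fin.val_lt_last h
  have h0 : ((π 0 : Fin (n+2)) : ℕ) = n := by omega
  refine ⟨h0, ?_⟩
  set m := π.symm (Fin.last (n+1)) with hm
  have hπm : π m = Fin.last (n+1) := π.apply_symm_apply _
  have hm0 : m ≠ 0 := fun he => h (by rw [← he]; exact hπm)
  have hm2 : ¬ (2 ≤ m.val) := by
    intro h2
    have hlt2 := hC 0 m (by simpa using h2)
    rw [hπm] at hlt2
    have := (Fin.lt_def).mp hlt2
    simp [Fin.val_last, h0] at this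
  have hme : m = 1 := by
    have h0' : m.val ≠ 0 := fun he => hm0 (Fin.ext he)
    have : m.val = 1 := by omega
    exact Fin.ext (by simp [this])
  rw [← hme, hπm]

noncomputable def downPerm2 (π : Equiv.Perm (Fin (n+2))) (h1 : π 1 = Fin.last (n+1))
    (h0 : ((π 0 : Fin (n+2)) : ℕ) = n) : Equiv.Perm (Fin n) :=
  downPerm1 (downPerm1 (π * Equiv.swap (0 : Fin (n+2)) 1)
      (by rw [Equiv.Perm.mul_apply, Equiv.swap_apply_left]; exact h1))
    (by
      apply Fin.ext
      rw [downPerm1_val]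
      show ((π * Equiv.swap (0 : Fin (n+2)) 1) (Fin.succ 0) : ℕ) = (Fin.last n : ℕ)
      rw [Fin.succ_zero_eq_one, Equiv.Perm.mul_apply, Equiv.swap_apply_right]
      simpa using h0)

@[simp] lemma downPerm2_val (π : Equiv.Perm (Fin (n+2))) (h1 : π 1 = Fin.last (n+1))
    (h0 : ((π 0 : Fin (n+2)) : ℕ) = n) (i : Fin n) :
    ((downPerm2 π h1 h0 i : Fin n) : ℕ) = π i.succ.succ := by
  show ((π * Equiv.swap (0 : Fin (n+2)) 1) i.succ.succ : ℕ) = π i.succ.succ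
  rw [Equiv.Perm.mul_apply, Equiv.swap_apply_of_ne_of_ne (Fin.succ_ne_zero _)
    (by simp [Fin.ext_iff])]

noncomputable def upPerm2 (π'' : Equiv.Perm (Fin n)) : Equiv.Perm (Fin (n+2)) :=
  upPerm1 (upPerm1 π'') * Equiv.swap (0 : Fin (n+2)) 1

@[simp] lemma upPerm2_zero (π'' : Equiv.Perm (Fin n)) :
    upPerm2 π'' 0 = (Fin.last n).castSucc := by
  rw [upPerm2, Equiv.Perm.mul_apply, Equiv.swap_apply_left, ← Fin.succ_zero_eq_one,
    upPerm1_succ, upPerm1_zero]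

@[simp] lemma upPerm2_one (π'' : Equiv.Perm (Fin n)) :
    upPerm2 π'' 1 = Fin.last (n+1) := by
  rw [upPerm2, Equiv.Perm.mul_apply, Equiv.swap_apply_right, upPerm1_zero]

@[simp] lemma upPerm2_succ (π'' : Equiv.Perm (Fin n)) (i : Fin n) :
    upPerm2 π'' i.succ.succ = ((π'' i).castSucc).castSucc := by
  rw [upPerm2, Equiv.Perm.mul_apply, Equiv.swap_apply_of_ne_of_ne (Fin.succ_ne_zero _)
    (by simp [Fin.ext_iff]), upPerm1_succ, upPerm1_succ]

end Counting
section Recurrence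

open Equiv Finset

lemma cardA (n : ℕ) :
    (univ.filter fun π : Equiv.Perm (Fin (n+2)) => Cond π ∧ π 0 = Fin.last (n+1)).card
      = (univ.filter fun π : Equiv.Perm (Fin (n+1)) => Cond π).card := by
  refine Finset.card_bij'
    (fun π hπ => downPerm1 π (Finset.mem_filter.mp hπ).2.2)
    (fun π' _ => upPerm1 π') ?hi ?hj ?left ?right
  case hi =>
    intro π hπ
    obtain ⟨-, hC, h0⟩ := Finset.mem_filter.mp hπ
    simp only [Finset.mem_filter, Finset.mem_univ, true_and]
    intro a b hab
    rw [Fin.lt_def]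
    simp only [downPerm1_val]
    exact Fin.lt_def.mp (hC a.succ b.succ (by simp [Fin.val_succ]; omega))
  case hj =>
    intro π' hπ'
    have hC' : Cond π' := (Finset.mem_filter.mp hπ').2
    simp only [Finset.mem_filter, Finset.mem_univ, true_and]
    refine ⟨?_, rfl⟩
    intro i k hik
    cases k using Fin.cases with
    | zero => simp at hik
    | succ j =>
      cases i using Fin.cases with
      | zero =>
        rw [upPerm1_zero, upPerm1_succ]
        exact Fin.castSucc_lt_last _
      | succ i' =>
        rw [upPerm1_succ, upPerm1_succ]
        rw [Fin.castSucc_lt_castSucc_iff]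
        exact hC' i' j (by simp [Fin.val_succ] at hik ⊢; omega)
  case left =>
    intro π hπ
    obtain ⟨-, hC, h0⟩ := Finset.mem_filter.mp hπ
    apply Equiv.ext
    intro k
    cases k using Fin.cases with
    | zero => rw [upPerm1_zero]; exact h0.symm
    | succ i =>
      rw [upPerm1_succ]
      apply Fin.ext
      rw [Fin.coe_castSucc, downPerm1_val]
  case right =>
    intro π' hπ'
    apply Equiv.ext
    intro i
    apply Fin.ext
    rw [downPerm1_val, upPerm1_succ, Fin.coe_castSucc]

lemma cardB (n : ℕ) :
    (univ.filter fun π : Equiv.Perm (Fin (n+2)) => Cond π ∧ ¬ π 0 = Fin.last (n+1)).card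
      = (univ.filter fun π : Equiv.Perm (Fin n) => Cond π).card := by
  refine Finset.card_bij'
    (fun π hπ => downPerm2 π
      (lemB π (Finset.mem_filter.mp hπ).2.1 (Finset.mem_filter.mp hπ).2.2).2
      (lemB π (Finset.mem_filter.mp hπ).2.1 (Finset.mem_filter.mp hπ).2.2).1)
    (fun π'' _ => upPerm2 π'') ?hi ?hj ?left ?right
  case hi =>
    intro π hπ
    have hC : Cond π := (Finset.mem_filter.mp hπ).2.1
    simp only [Finset.mem_filter, Finset.mem_univ, true_and]
    intro a b hab
    rw [Fin.lt_def]
    simp only [downPerm2_val]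
    exact Fin.lt_def.mp (hC a.succ.succ b.succ.succ (by simp [Fin.val_succ]; omega))
  case hj =>
    intro π'' hπ''
    have hC'' : Cond π'' := (Finset.mem_filter.mp hπ'').2
    simp only [Finset.mem_filter, Finset.mem_univ, true_and]
    constructor
    · intro i k hik
      cases k using Fin.cases with
      | zero => simp at hik
      | succ j =>
        cases j using Fin.cases with
        | zero => simp [Fin.val_succ] at hik
        | succ m =>
          rw [upPerm2_succ]
          cases i using Fin.cases with
          | zero =>
            rw [upPerm2_zero]
            rw [Fin.lt_def]
            simp [Fin.coe_castSucc]
          | succ i' =>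
            cases i' using Fin.cases with
            | zero =>
              rw [show (Fin.succ (0 : Fin (n+1))) = (1 : Fin (n+2)) from Fin.succ_zero_eq_one,
                upPerm2_one]
              rw [Fin.lt_def]
              simp [Fin.coe_castSucc, Fin.val_last]
            | succ i'' =>
              rw [upPerm2_succ, Fin.lt_def]
              simp only [Fin.coe_castSucc]
              exact Fin.lt_def.mp (hC'' i'' m (by simp [Fin.val_succ] at hik ⊢; omega))
    · intro he
      have := congrArg Fin.val ((upPerm2_zero π'').symm.trans he)
      simp [Fin.coe_castSucc, Fin.val_last] at this
  case left =>
    intro π hπ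
    obtain ⟨-, hC, h0⟩ := Finset.mem_filter.mp hπ
    obtain ⟨hv, h1⟩ := lemB π hC h0
    apply Equiv.ext
    intro k
    cases k using Fin.cases with
    | zero =>
      rw [upPerm2_zero]
      apply Fin.ext
      rw [Fin.coe_castSucc, Fin.val_last]
      exact hv.symm
    | succ j =>
      cases j using Fin.cases with
      | zero =>
        rw [show (Fin.succ (0 : Fin (n+1))) = (1 : Fin (n+2)) from Fin.succ_zero_eq_one,
          upPerm2_one]
        exact h1.symm
      | succ m =>
        rw [upPerm2_succ]
        apply Fin.ext
        rw [Fin.coe_castSucc, Fin.coe_castSucc, downPerm2_val]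
  case right =>
    intro π'' hπ''
    apply Equiv.ext
    intro i
    apply Fin.ext
    rw [downPerm2_val, upPerm2_succ, Fin.coe_castSucc, Fin.coe_castSucc]

def S (n : ℕ) : Finset (Equiv.Perm (Fin n)) := univ.filter (fun π => Cond π)

lemma S_rec (n : ℕ) : (S (n+2)).card = (S (n+1)).card + (S n).card := by
  have hsplit := Finset.card_filter_add_card_filter_not
    (s := S (n+2)) (p := fun π => π 0 = Fin.last (n+1))
  rw [← hsplit]
  congr 1
  · rw [S, Finset.filter_filter]
    exact cardA n
  · rw [S, Finset.filter_filter]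
    exact cardB n

lemma S_eq_univ (n : ℕ) (h : n ≤ 2) : S n = univ := by
  apply Finset.filter_true_of_mem
  intro π _
  intro i k hik
  have := k.isLt
  omega

lemma S_one : (S 1).card = 1 := by
  rw [S_eq_univ 1 (by norm_num), Finset.card_univ, Fintype.card_perm, Fintype.card_fin]; rfl

lemma S_two : (S 2).card = 2 := by
  rw [S_eq_univ 2 (by norm_num), Finset.card_univ, Fintype.card_perm, Fintype.card_fin]; rfl

lemma S_fib : ∀ m : ℕ, (S (m+1)).card = Nat.fib (m+2) ∧ (S (m+2)).card = Nat.fib (m+3)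
  | 0 => ⟨by rw [S_one]; rfl, by rw [S_two]; rfl⟩
  | m+1 => ⟨(S_fib m).2, by
      have h4 : Nat.fib (m+1+3) = Nat.fib (m+2) + Nat.fib (m+3) := Nat.fib_add_two
      rw [S_rec, (S_fib m).2, (S_fib m).1, h4]
      omega⟩

end Recurrence

theorem avoid_123_132_213_eq_fib (n : ℕ) (hn : 1 ≤ n) :
    AvoidCount [[1, 2, 3], [1, 3, 2], [2, 1, 3]] n = Nat.fib (n + 1) := by
  obtain ⟨m, rfl⟩ : ∃ m, n = m + 1 := ⟨n - 1, by omega⟩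
  rw [AvoidCount, Nat.card_congr (Equiv.subtypeEquivRight (fun π => cond_iff π)),
    Nat.card_eq_fintype_card, Fintype.card_subtype]
  exact (S_fib m).1
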